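/- arXiv:1706.01945 — 2 statements merged into one kernel-verified Lean document; each statement's English description precedes it below -/
import Mathlib

section
/- Let κ, μ be positive integers with κ ≥ 2^{⌊log₂ μ⌋+1}. Define ρ = ⌊log₂ μ⌋ + 1, ν = κ − Σ_{i=1}^{ρ} 2^{i−1} = κ − (2^ρ − 1), and η = ⌊ν/μ⌋. Then the bounded-coefficient encoding c consisting of the coefficients (2^0, 2^1, ..., 2^{ρ−1}, μ repeated η times, and ν − ημ if ν − ημ ≠ 0) is κ-complete: the set of values {Σ_j c_j y_j : y ∈ {0,1}^d} equals {0, 1, ..., κ}. -/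
/-- The bounded-coefficient encoding of Algorithm 1 (general case), as a list of
coefficients: `2^0, …, 2^{ρ-1}`, `η` copies of `μ`, and the residual `ν - η·μ` if nonzero. -/
def boundedCoeffEncoding (κ μ : ℕ) : List ℕ :=
  let ρ := Nat.log 2 μ + 1
  let ν := κ - (2 ^ ρ - 1)
  let η := ν / μ
  (List.range ρ).map (2 ^ ·) ++ List.replicate η μ ++
    (if ν - η * μ ≠ 0 then [ν - η * μ] else [])

lemma cover_step (l : List ℕ) (x : ℕ) (hx : x ≤ l.sum + 1)
    (H : ∀ m ≤ l.sum, ∃ t : List ℕ, t.Sublist l ∧ t.sum = m) :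
    ∀ m ≤ l.sum + x, ∃ t : List ℕ, t.Sublist (l ++ [x]) ∧ t.sum = m := by
  intro m hm
  by_cases hc : m ≤ l.sum
  · obtain ⟨t, ht, hs⟩ := H m hc
    exact ⟨t, ht.trans (List.sublist_append_left _ _), hs⟩
  · push_neg at hc
    obtain ⟨t, ht, hs⟩ := H (m - x) (by omega)
    refine ⟨t ++ [x], ht.append (List.Sublist.refl _), ?_⟩
    simp [hs]; omega

lemma pow_sum (ρ : ℕ) : ((List.range ρ).map (2 ^ ·)).sum = 2 ^ ρ - 1 := by
  induction ρ with
  | zero => simp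
  | succ n ih =>
    rw [List.range_succ, List.map_append, List.sum_append, ih]
    have : 1 ≤ 2 ^ n := Nat.one_le_two_pow
    simp [pow_succ]; omega

lemma pow_cover (ρ : ℕ) :
    ∀ m ≤ 2 ^ ρ - 1, ∃ t : List ℕ, t.Sublist ((List.range ρ).map (2 ^ ·)) ∧ t.sum = m := by
  induction ρ with
  | zero => intro m hm; exact ⟨[], List.nil_sublist _, by simp; omega⟩
  | succ n ih =>
    intro m hm
    rw [List.range_succ, List.map_append]
    have h1 : 1 ≤ 2 ^ n := Nat.one_le_two_pow
    have := cover_step ((List.range n).map (2 ^ ·)) (2 ^ n)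
      (by rw [pow_sum]; omega) (by rw [pow_sum]; exact ih)
    exact this m (by rw [pow_sum]; rw [pow_succ] at hm; omega)

lemma rep_cover (l : List ℕ) (μ n : ℕ) (hμ : μ ≤ l.sum + 1)
    (H : ∀ m ≤ l.sum, ∃ t : List ℕ, t.Sublist l ∧ t.sum = m) :
    ∀ m ≤ l.sum + n * μ, ∃ t : List ℕ, t.Sublist (l ++ List.replicate n μ) ∧ t.sum = m := by
  induction n with
  | zero => simpa using H
  | succ k ih =>
    intro m hm
    rw [Nat.succ_mul] at hm
    have h2 : (l ++ List.replicate k μ).sum = l.sum + k * μ := by simp [mul_comm]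
    have := cover_step (l ++ List.replicate k μ) μ (by omega)
      (by rw [h2]; exact ih)
    rw [h2] at this
    obtain ⟨t, ht, hs⟩ := this m (by omega)
    refine ⟨t, ?_, hs⟩
    have : (l ++ List.replicate k μ) ++ [μ] = l ++ List.replicate (k + 1) μ := by
      rw [List.append_assoc, List.replicate_succ' ]
    rwa [this] at ht

theorem boundedCoeffEncoding_complete (κ μ : ℕ) (hμ : 1 ≤ μ) (hκ : 1 ≤ κ)
    (h : 2 ^ (Nat.log 2 μ + 1) ≤ κ) :
    ∀ m : ℕ, (∃ t : List ℕ, t.Sublist (boundedCoeffEncoding κ μ) ∧ t.sum = m) ↔ m ≤ κ := by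
  set ρ := Nat.log 2 μ + 1 with hρ
  set ν := κ - (2 ^ ρ - 1) with hν
  set η := ν / μ with hη
  have hmod := Nat.div_add_mod ν μ
  have hr : ν - η * μ = ν % μ := by rw [hη, mul_comm]; omega
  have heq : η * μ + ν % μ = ν := by rw [hη, mul_comm]; omega
  have hrlt : ν % μ < μ := Nat.mod_lt _ hμ
  have hμlt : μ < 2 ^ ρ := Nat.lt_pow_succ_log_self (by norm_num) μ
  have hpow : 1 ≤ 2 ^ ρ := Nat.one_le_two_pow
  have hsum0 : ((List.range ρ).map (2 ^ ·)).sum = 2 ^ ρ - 1 := pow_sum ρ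
  have hsum1 : ((List.range ρ).map (2 ^ ·) ++ List.replicate η μ).sum
      = 2 ^ ρ - 1 + η * μ := by simp [hsum0, mul_comm]
  have henc : boundedCoeffEncoding κ μ =
      ((List.range ρ).map (2 ^ ·) ++ List.replicate η μ) ++
        (if ν - η * μ ≠ 0 then [ν - η * μ] else []) := rfl
  have hcov1 : ∀ m ≤ 2 ^ ρ - 1 + η * μ,
      ∃ t : List ℕ, t.Sublist ((List.range ρ).map (2 ^ ·) ++ List.replicate η μ) ∧ t.sum = m := by
    have := rep_cover ((List.range ρ).map (2 ^ ·)) μ η (by rw [hsum0]; omega)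
      (by rw [hsum0]; exact pow_cover ρ)
    rw [hsum0] at this; exact this
  have hsumenc : (boundedCoeffEncoding κ μ).sum = κ := by
    rw [henc, List.sum_append, hsum1, hr]
    by_cases hc : ν % μ ≠ 0 <;> simp [hc] <;> omega
  intro m
  constructor
  · rintro ⟨t, ht, rfl⟩
    calc t.sum ≤ (boundedCoeffEncoding κ μ).sum :=
          ht.sum_le_sum (fun a _ => Nat.zero_le a)
      _ = κ := hsumenc
  · intro hm
    rw [henc]
    by_cases hc : ν - η * μ ≠ 0
    · rw [if_pos hc]
      have := cover_step ((List.range ρ).map (2 ^ ·) ++ List.replicate η μ)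
        (ν - η * μ) (by rw [hsum1, hr]; omega) (by rw [hsum1]; exact hcov1)
      rw [hsum1] at this
      exact this m (by rw [hr] at hc ⊢; omega)
    · rw [if_neg hc, List.append_nil]
      exact hcov1 m (by rw [hr] at hc; omega)
end

section
/- Let κ, μ be positive integers with κ ≥ 2^{⌊log₂ μ⌋+1}, ρ = ⌊log₂ μ⌋+1, ν = κ − (2^ρ − 1), η = ⌊ν/μ⌋. The width of the bounded-coefficient encoding equals ρ + η + 1 if ν − ημ ≠ 0 and ρ + η otherwise, and this width is minimal: any κ-complete encoding c ∈ ℤ_+^d with all coefficients c_j ≤ μ satisfies d ≥ ρ + η + (if ν − ημ ≠ 0 then 1 else 0). -/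
theorem boundedCoeffEncoding_min_width (κ μ : ℕ) (hμ : 1 ≤ μ)
    (h : 2 ^ (Nat.log 2 μ + 1) ≤ κ)
    (ρ ν η : ℕ) (hρ : ρ = Nat.log 2 μ + 1) (hν : ν = κ - (2 ^ ρ - 1)) (hη : η = ν / μ) :
    (boundedCoeffEncoding κ μ).length = ρ + η + (if ν - η * μ ≠ 0 then 1 else 0) ∧
    ∀ (d : ℕ) (c : Fin d → ℕ), (∀ j, 0 < c j) → (∀ j, c j ≤ μ) →
      (∀ m : ℕ, (∃ S : Finset (Fin d), ∑ i ∈ S, c i = m) ↔ m ≤ κ) →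
      d ≥ ρ + η + (if ν - η * μ ≠ 0 then 1 else 0) := by
  constructor
  · subst hρ hν hη
    simp only [boundedCoeffEncoding, List.length_append, List.length_map, List.length_range,
      List.length_replicate]
    split <;> simp
  · intro d c hpos hle hrep
    set σ := Tuple.sort c with hσ
    have hmono : Monotone (c ∘ σ) := Tuple.monotone_sort c
    set g : ℕ → ℕ := fun i => if h : i < d then c (σ ⟨i, h⟩) else 0 with hg
    set s : ℕ → ℕ := fun k => ∑ i ∈ Finset.range k, g i with hs
    have hgμ : ∀ i, g i ≤ μ := by
      intro i
      simp only [hg]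
      split
      · exact hle _
      · exact Nat.zero_le _
    -- total sum equals κ
    have htot : ∑ i, c i = κ := by
      have h1 : ∑ i, c i ≤ κ := (hrep _).mp ⟨Finset.univ, rfl⟩
      obtain ⟨S, hS⟩ := (hrep κ).mpr le_rfl
      have h2 : κ ≤ ∑ i, c i := by
        rw [← hS]
        exact Finset.sum_le_sum_of_subset (Finset.subset_univ S)
      omega
    have hsd : s d = κ := by
      have e1 : s d = ∑ i : Fin d, g i := (Fin.sum_univ_eq_sum_range g d).symm
      have e2 : ∑ i : Fin d, g i = ∑ i : Fin d, c (σ i) := by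
        apply Finset.sum_congr rfl
        intro i _
        simp only [hg, dif_pos i.isLt]
      have e3 : ∑ i : Fin d, c (σ i) = ∑ i, c i := Equiv.sum_comp σ c
      rw [e1, e2, e3, htot]
    have hsmono : Monotone s := by
      intro a b hab
      exact Finset.sum_le_sum_of_subset (Finset.range_subset_range.mpr hab)
    -- key completeness step: next coefficient ≤ prefix sum + 1
    have hstep : ∀ k, k < d → g k ≤ s k + 1 := by
      intro k hk
      have hgk1 : 1 ≤ g k := by
        simp only [hg, dif_pos hk]; exact hpos _
      have hsk1 : s k + 1 ≤ κ := by
        have : s (k + 1) = s k + g k := Finset.sum_range_succ g k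
        have h2 : s (k + 1) ≤ κ := hsd ▸ hsmono hk
        omega
      obtain ⟨T, hT⟩ := (hrep (s k + 1)).mpr hsk1
      set S : Finset (Fin d) := T.map σ.symm.toEmbedding with hSdef
      have hS : ∑ i ∈ S, c (σ i) = s k + 1 := by
        rw [hSdef, Finset.sum_map]
        simpa using hT
      by_cases hall : ∀ j ∈ S, (j : ℕ) < k
      · exfalso
        have hle2 : ∑ i ∈ S, c (σ i) ≤ s k := by
          have e : ∑ j ∈ S.map Fin.valEmbedding, g j = ∑ i ∈ S, c (σ i) := by
            rw [Finset.sum_map S Fin.valEmbedding g]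
            apply Finset.sum_congr rfl
            intro i _
            simp only [hg, Fin.valEmbedding_apply, dif_pos i.isLt]
          rw [← e]
          apply Finset.sum_le_sum_of_subset
          intro j hj
          simp only [Finset.mem_map, Fin.valEmbedding_apply] at hj
          obtain ⟨i, hiS, rfl⟩ := hj
          exact Finset.mem_range.mpr (hall i hiS)
        omega
      · push_neg at hall
        obtain ⟨j, hjS, hjk⟩ := hall
        have h1 : c (σ ⟨k, hk⟩) ≤ c (σ j) := hmono (by rw [Fin.le_def]; exact hjk)
        have h2 : c (σ j) ≤ ∑ i ∈ S, c (σ i) :=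
          Finset.single_le_sum (f := fun i => c (σ i)) (fun i _ => Nat.zero_le _) hjS
        simp only [hg, dif_pos hk]
        omega
    -- prefix sums bounded by 2^k - 1
    have hpow : ∀ k, k ≤ d → s k + 1 ≤ 2 ^ k := by
      intro k
      induction k with
      | zero => intro _; simp [hs]
      | succ n ih =>
        intro hnd
        have h1 := ih (by omega)
        have h2 := hstep n (by omega)
        have h3 : s (n + 1) = s n + g n := Finset.sum_range_succ g n
        have : 2 ^ (n + 1) = 2 * 2 ^ n := by ring
        omega
    have hρd : ρ < d := by
      have h1 : s d + 1 ≤ 2 ^ d := hpow d le_rfl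
      have h2 : 2 ^ ρ ≤ κ := hρ ▸ h
      have h3 : 2 ^ ρ < 2 ^ d := by omega
      exact (Nat.pow_lt_pow_iff_right (by norm_num)).mp h3
    -- κ ≤ 2^ρ - 1 + (d - ρ) * μ
    have hν2 : ν ≤ (d - ρ) * μ := by
      have hsplit : s d = s ρ + ∑ i ∈ Finset.Ico ρ d, g i := by
        rw [hs]
        simp only [Finset.range_eq_Ico]
        rw [← Finset.sum_Ico_consecutive g (Nat.zero_le ρ) (le_of_lt hρd)]
      have htail : ∑ i ∈ Finset.Ico ρ d, g i ≤ (d - ρ) * μ := by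
        calc ∑ i ∈ Finset.Ico ρ d, g i ≤ (Finset.Ico ρ d).card • μ :=
              Finset.sum_le_card_nsmul _ _ _ (fun i _ => hgμ i)
          _ = (d - ρ) * μ := by rw [Nat.card_Ico]; simp [smul_eq_mul]
      have hsρ : s ρ + 1 ≤ 2 ^ ρ := hpow ρ (le_of_lt hρd)
      have h1 : 1 ≤ 2 ^ ρ := Nat.one_le_two_pow
      omega
    have hdm : η * μ + ν % μ = ν := by rw [hη]; exact Nat.div_add_mod' ν μ
    have hmodlt : ν % μ < μ := Nat.mod_lt _ hμ
    have hrem : ν - η * μ = ν % μ := by omega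
    split
    · rename_i hne
      rw [hrem] at hne
      by_contra hcon
      push_neg at hcon
      have hD : d - ρ ≤ η := by omega
      have hmm : (d - ρ) * μ ≤ η * μ := Nat.mul_le_mul_right μ hD
      omega
    · rename_i heq
      rw [hrem] at heq
      push_neg at heq
      have hνη : ν = η * μ := by omega
      have hmm : η * μ ≤ (d - ρ) * μ := hνη ▸ hν2
      have : η ≤ d - ρ := Nat.le_of_mul_le_mul_right hmm hμ
      omega
end
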